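/- Let L be a language all of whose relation symbols are unary (and with no function or constant symbols), and let T be a complete L-theory having a finite model. Then T is approximable (i.e., T is 𝒯-approximated for some family 𝒯 of complete L-theories) if and only if L has infinitely many relation symbols. -/

import Mathlib

open FirstOrder Language Set

universe u v w w'

namespace Approx

variable {L : FirstOrder.Language.{u, v}}

attribute [local instance] Classical.propDecidable

/-- A complete theory: a satisfiable set of sentences deciding every sentence. -/
def CompleteTheory (T : L.Theory) : Prop :=
  T.IsSatisfiable ∧ ∀ φ : L.Sentence, φ ∈ T ∨ φ.not ∈ T

/-- `T` is `𝒯`-approximated: `T ∉ 𝒯` and every sentence of `T` lies in some member of `𝒯`. -/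
def Approximated (𝒯 : Set L.Theory) (T : L.Theory) : Prop :=
  T ∉ 𝒯 ∧ ∀ φ ∈ T, ∃ T' ∈ 𝒯, φ ∈ T'

/-- The `φ`-neighbourhood `𝒯_φ` of a family of theories. -/
def Nbhd (𝒯 : Set L.Theory) (φ : L.Sentence) : Set L.Theory :=
  {T' ∈ 𝒯 | φ ∈ T'}

/-- An accumulation point of `𝒯`: a complete theory each of whose sentences has an
infinite neighbourhood in `𝒯`. -/
def AccPoint (𝒯 : Set L.Theory) (T : L.Theory) : Prop :=
  CompleteTheory T ∧ ∀ φ ∈ T, (Nbhd 𝒯 φ).Infinite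

/-- The `E`-closure of `𝒯`: `𝒯` together with all its accumulation points. -/
def ClE (𝒯 : Set L.Theory) : Set L.Theory :=
  𝒯 ∪ {T | AccPoint 𝒯 T}

section Flip

variable {W : Type w}

noncomputable def flip (S : L.Structure W) (R : Σ n, L.Relations n) : L.Structure W where
  funMap := fun {_} f => S.funMap f
  RelMap := fun {n} r x =>
    if (⟨n, r⟩ : Σ n, L.Relations n) = R then ¬ ∃ z : Fin n → W, S.RelMap r z
    else S.RelMap r x

lemma flip_relMap (S : L.Structure W) (R : Σ n, L.Relations n) {n : ℕ} (r : L.Relations n)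
    (x : Fin n → W) :
    @Structure.RelMap L W (flip S R) n r x =
      if (⟨n, r⟩ : Σ n, L.Relations n) = R then ¬ ∃ z : Fin n → W, S.RelMap r z
      else S.RelMap r x := rfl

lemma realize_term_flip [L.IsRelational] (S : L.Structure W) (R : Σ n, L.Relations n)
    {α : Type*} (v : α → W) (t : L.Term α) :
    @Term.realize L W (flip S R) α v t = @Term.realize L W S α v t := by
  induction t with
  | var => rfl
  | func f ts ih => exact isEmptyElim f

lemma flip_realize_eventually [L.IsRelational] (S : L.Structure W) {α : Type*} {k : ℕ}
    (φ : L.BoundedFormula α k) :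
    ∃ s : Set (Σ n, L.Relations n), s.Finite ∧ ∀ R ∉ s, ∀ (v : α → W) (xs : Fin k → W),
      (@BoundedFormula.Realize L W (flip S R) α k φ v xs ↔
        @BoundedFormula.Realize L W S α k φ v xs) := by
  induction φ with
  | falsum => exact ⟨∅, Set.finite_empty, fun _ _ _ _ => Iff.rfl⟩
  | equal t₁ t₂ =>
    refine ⟨∅, Set.finite_empty, fun R _ v xs => ?_⟩
    show @Term.realize L W (flip S R) _ _ t₁ = @Term.realize L W (flip S R) _ _ t₂ ↔
      @Term.realize L W S _ _ t₁ = @Term.realize L W S _ _ t₂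
    rw [realize_term_flip, realize_term_flip]
  | @rel k n r ts =>
    refine ⟨{⟨n, r⟩}, Set.finite_singleton _, fun R hR v xs => ?_⟩
    show @Structure.RelMap L W (flip S R) n r _ ↔ @Structure.RelMap L W S n r _
    have hts : (fun i => @Term.realize L W (flip S R) _ (Sum.elim v xs) (ts i)) =
        (fun i => @Term.realize L W S _ (Sum.elim v xs) (ts i)) :=
      funext fun i => realize_term_flip S R _ _
    rw [flip_relMap, if_neg (Ne.symm (by simpa using hR)), hts]
  | imp φ ψ ihφ ihψ =>
    obtain ⟨s₁, h₁, H₁⟩ := ihφ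
    obtain ⟨s₂, h₂, H₂⟩ := ihψ
    refine ⟨s₁ ∪ s₂, h₁.union h₂, fun R hR v xs => ?_⟩
    exact imp_congr (H₁ R (fun h => hR (Or.inl h)) v xs) (H₂ R (fun h => hR (Or.inr h)) v xs)
  | all φ ih =>
    obtain ⟨s, hs, H⟩ := ih
    exact ⟨s, hs, fun R hR v xs => forall_congr' fun a => H R hR v (Fin.snoc xs a)⟩

/-- The sentence `∃ x, r x`. -/
def exR (r : L.Relations 1) : L.Sentence :=
  (r.boundedFormula₁ (Term.var (Sum.inr 0))).ex

lemma realize_exR (S : L.Structure W) (r : L.Relations 1) :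
    @Sentence.Realize L W S (exR r) ↔ ∃ z : Fin 1 → W, S.RelMap r z := by
  letI := S
  have : (exR r).Realize W ↔ ∃ x : W, Structure.RelMap r ![x] := by
    simp [exR, Sentence.Realize, Formula.Realize, BoundedFormula.realize_ex,
      BoundedFormula.realize_rel₁, Fin.snoc]
  rw [this]
  constructor
  · rintro ⟨x, hx⟩; exact ⟨![x], hx⟩
  · rintro ⟨z, hz⟩
    refine ⟨z 0, ?_⟩
    have : ![z 0] = z := funext fun i => by rw [Subsingleton.elim i 0]; rfl
    rwa [this]

lemma realize_exR_flip [Nonempty W] (S : L.Structure W) (r : L.Relations 1) :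
    @Sentence.Realize L W (flip S ⟨1, r⟩) (exR r) ↔ ¬ ∃ z : Fin 1 → W, S.RelMap r z := by
  rw [realize_exR]
  constructor
  · rintro ⟨z, hz⟩
    rwa [flip_relMap, if_pos rfl] at hz
  · intro h
    obtain ⟨x⟩ := ‹Nonempty W›
    exact ⟨![x], by rwa [flip_relMap, if_pos rfl]⟩

lemma completeTheory_flip_ne [Nonempty W] (S : L.Structure W) (r : L.Relations 1) :
    @Language.completeTheory L W (flip S ⟨1, r⟩) ≠ @Language.completeTheory L W S := by
  intro h
  have h1 : exR r ∈ @Language.completeTheory L W (flip S ⟨1, r⟩) ↔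
      ¬ ∃ z : Fin 1 → W, S.RelMap r z := by
    rw [@mem_completeTheory L W (flip S ⟨1, r⟩), realize_exR_flip]
  have h2 : exR r ∈ @Language.completeTheory L W S ↔ ∃ z : Fin 1 → W, S.RelMap r z := by
    rw [@mem_completeTheory L W S, realize_exR]
  rw [h] at h1
  tauto

lemma structure_completeTheory_complete (S : L.Structure W) [Nonempty W] :
    CompleteTheory (@Language.completeTheory L W S) :=
  ⟨@completeTheory.isSatisfiable L W S _, fun φ => @completeTheory.mem_or_not_mem L W S φ⟩

end Flip

lemma eq_completeTheory_of_models {T : L.Theory} (hT : CompleteTheory T)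
    {W : Type w} [L.Structure W] [W ⊨ T] : T = L.completeTheory W := by
  ext φ
  constructor
  · exact fun h => mem_completeTheory.2 (T.realize_sentence_of_mem h)
  · intro h
    rcases hT.2 φ with h' | h'
    · exact h'
    · exact absurd (mem_completeTheory.1 h)
        (by simpa using T.realize_sentence_of_mem h')

section Chi

variable [Fintype (L.Relations 1)]

open Classical in
noncomputable def chi (n : ℕ) (tp : Fin n → L.Relations 1 → Prop) : L.Sentence :=
  ((BoundedFormula.iInf fun p : Fin n × Fin n =>
      if p.1 = p.2 then ⊤ else ∼(Term.var (Sum.inr p.1) =' Term.var (Sum.inr p.2))) ⊓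
    ((BoundedFormula.iSup fun i : Fin n =>
        Term.var (Sum.inr (Fin.castSucc i)) =' Term.var (Sum.inr (Fin.last n))).all ⊓
      BoundedFormula.iInf fun q : Fin n × L.Relations 1 =>
        if tp q.1 q.2 then q.2.boundedFormula₁ (Term.var (Sum.inr q.1))
        else ∼(q.2.boundedFormula₁ (Term.var (Sum.inr q.1))))).exs

lemma realize_chi {n : ℕ} {tp : Fin n → L.Relations 1 → Prop} {N : Type w'} [L.Structure N] :
    N ⊨ chi (L := L) n tp ↔ ∃ xs : Fin n → N, Function.Injective xs ∧
      Function.Surjective xs ∧ ∀ i r, (Structure.RelMap r ![xs i] ↔ tp i r) := by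
  rw [chi, Sentence.Realize, BoundedFormula.realize_exs]
  apply exists_congr; intro xs
  rw [BoundedFormula.realize_inf, BoundedFormula.realize_inf]
  apply and_congr
  · rw [BoundedFormula.realize_iInf]
    constructor
    · intro h a b hab
      by_contra hne
      have := h (a, b)
      rw [if_neg hne, BoundedFormula.realize_not, BoundedFormula.realize_bdEqual] at this
      simp only [Term.realize_var, Sum.elim_inr] at this
      exact this hab
    · rintro h ⟨a, b⟩
      by_cases hab : a = b
      · rw [if_pos hab]; exact BoundedFormula.realize_top.2 trivial
      · rw [if_neg hab, BoundedFormula.realize_not, BoundedFormula.realize_bdEqual]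
        simp only [Term.realize_var, Sum.elim_inr]
        exact fun he => hab (h he)
  apply and_congr
  · rw [BoundedFormula.realize_all]
    apply forall_congr'; intro y
    rw [BoundedFormula.realize_iSup]
    simp only [Finset.mem_univ, true_and, BoundedFormula.realize_bdEqual, Term.realize_var,
      Sum.elim_inr, Fin.snoc_castSucc, Fin.snoc_last]
  · rw [BoundedFormula.realize_iInf]
    constructor
    · intro h i r
      have := h (i, r)
      by_cases htp : tp i r
      · rw [if_pos htp, BoundedFormula.realize_rel₁] at this
        simp only [Term.realize_var, Sum.elim_inr] at this
        simpa [htp] using this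
      · rw [if_neg htp, BoundedFormula.realize_not, BoundedFormula.realize_rel₁] at this
        simp only [Term.realize_var, Sum.elim_inr] at this
        simpa [htp] using this
    · rintro h ⟨i, r⟩
      by_cases htp : tp i r
      · rw [if_pos htp, BoundedFormula.realize_rel₁]
        simp only [Term.realize_var, Sum.elim_inr]
        exact (h i r).2 htp
      · rw [if_neg htp, BoundedFormula.realize_not, BoundedFormula.realize_rel₁]
        simp only [Term.realize_var, Sum.elim_inr]
        exact fun hr => htp ((h i r).1 hr)

lemma chi_iso [L.IsRelational] (hunary : ∀ n, n ≠ 1 → IsEmpty (L.Relations n))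
    {n : ℕ} {M : Type w} [L.Structure M] (e : Fin n ≃ M)
    {N : Type w'} [L.Structure N]
    (hN : N ⊨ chi (L := L) n fun i r => Structure.RelMap r ![e i]) :
    Nonempty (M ≃[L] N) := by
  obtain ⟨xs, hinj, hsurj, hdiag⟩ := realize_chi.mp hN
  have hbij : Function.Bijective (fun m : M => xs (e.symm m)) := by
    constructor
    · intro a b hab
      simpa using e.symm.injective (hinj hab)
    · intro y
      obtain ⟨i, hi⟩ := hsurj y
      exact ⟨e i, by simp [hi]⟩
  refine ⟨⟨Equiv.ofBijective _ hbij, fun {k} f x => isEmptyElim f, ?_⟩⟩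
  intro k r x
  rcases eq_or_ne k 1 with rfl | hk
  · have hx : x = ![x 0] := funext fun i => by rw [Subsingleton.elim i 0]; rfl
    have hfx : ((Equiv.ofBijective (fun m : M => xs (e.symm m)) hbij).toFun ∘ x) =
        ![xs (e.symm (x 0))] := funext fun i => by rw [Subsingleton.elim i 0]; rfl
    rw [hfx]
    have h2 := hdiag (e.symm (x 0)) r
    rw [e.apply_symm_apply] at h2
    rw [h2]
    exact (by rw [← hx] : Structure.RelMap r ![x 0] ↔ Structure.RelMap r x)
  · exact (hunary k hk).elim r

end Chi

lemma relations_one_injective :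
    Function.Injective (fun r : L.Relations 1 => (⟨1, r⟩ : Σ n, L.Relations n)) :=
  sigma_mk_injective

lemma infinite_relations_one (hunary : ∀ n, n ≠ 1 → IsEmpty (L.Relations n))
    (h : Infinite (Σ n, L.Relations n)) : Infinite (L.Relations 1) := by
  refine Infinite.of_injective (fun p : Σ n, L.Relations n =>
    if h1 : p.1 = 1 then (h1 ▸ p.2 : L.Relations 1) else ((hunary p.1 h1).elim p.2)) ?_
  rintro ⟨n, r⟩ ⟨m, s⟩ hrs
  rcases eq_or_ne n 1 with rfl | hn
  · rcases eq_or_ne m 1 with rfl | hm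
    · simp at hrs
      exact Sigma.ext rfl (heq_of_eq hrs)
    · exact ((hunary m hm).elim s)
  · exact ((hunary n hn).elim r)



/-- a complete theory `T` of a purely unary relational language having a finite
model is approximable iff the language has infinitely many relation symbols. -/
theorem unary_finite_model_approximable_iff
    {L : FirstOrder.Language.{u, v}} [L.IsRelational]
    (hunary : ∀ n, n ≠ 1 → IsEmpty (L.Relations n))
    (T : L.Theory) (hT : CompleteTheory T)
    (hfin : ∃ M : Theory.ModelType.{u, v, max u v} T, Finite M) :
    (∃ 𝒯 : Set L.Theory, (∀ S ∈ 𝒯, CompleteTheory S) ∧ Approximated 𝒯 T) ↔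
      Infinite (Σ n, L.Relations n) := by
  classical
  obtain ⟨M, hMfin⟩ := hfin
  have hTeq : T = L.completeTheory M := eq_completeTheory_of_models hT
  constructor
  · rintro ⟨𝒯, h𝒯c, hTnot, happrox⟩
    by_contra hinf
    have hfinS : Finite (Σ n, L.Relations n) := not_infinite_iff_finite.mp hinf
    have hfinR : Finite (L.Relations 1) :=
      Finite.of_injective _ (relations_one_injective (L := L))
    letI := Fintype.ofFinite (L.Relations 1)
    haveI : Finite M := hMfin
    letI := Fintype.ofFinite M
    set e : Fin (Fintype.card M) ≃ M := (Fintype.equivFin M).symm with he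
    set tp : Fin (Fintype.card M) → L.Relations 1 → Prop :=
      fun i r => Structure.RelMap r ![e i] with htp
    have hchiM : (M : Type _) ⊨ chi (L := L) (Fintype.card M) tp :=
      realize_chi.mpr ⟨fun i => e i, e.injective, e.surjective, fun _ _ => Iff.rfl⟩
    have hchiT : chi (L := L) (Fintype.card M) tp ∈ T :=
      (Set.ext_iff.1 hTeq _).2 (mem_completeTheory.2 hchiM)
    obtain ⟨T', hT'mem, hT'chi⟩ := happrox _ hchiT
    have hT'c := h𝒯c T' hT'mem
    obtain ⟨N⟩ := hT'c.1
    have hchiN : (N : Type _) ⊨ chi (L := L) (Fintype.card M) tp :=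
      T'.realize_sentence_of_mem hT'chi
    obtain ⟨g⟩ := chi_iso hunary e hchiN
    have hsent : ∀ φ : L.Sentence, ((M : Type _) ⊨ φ ↔ (N : Type _) ⊨ φ) := fun φ =>
      StrongHomClass.realize_sentence g φ
    have hT'T : T' = T := by
      ext φ
      constructor
      · intro hφ
        exact (Set.ext_iff.1 hTeq φ).2
          (mem_completeTheory.2 ((hsent φ).2 (T'.realize_sentence_of_mem hφ)))
      · intro hφ
        rcases hT'c.2 φ with h' | h'
        · exact h'
        · exfalso
          have h1 : (N : Type _) ⊨ Formula.not φ := T'.realize_sentence_of_mem h'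
          have hMφ : (M : Type _) ⊨ φ := mem_completeTheory.1 ((Set.ext_iff.1 hTeq φ).1 hφ)
          have h2 : ¬ (N : Type _) ⊨ φ := by simpa using h1
          exact h2 ((hsent φ).1 hMφ)
    exact hTnot (hT'T ▸ hT'mem)
  · intro hinf
    haveI hinfR := infinite_relations_one hunary hinf
    refine ⟨{Th | ∃ r : L.Relations 1,
      Th = @Language.completeTheory L M (flip (inferInstance) ⟨1, r⟩)}, ?_, ?_, ?_⟩
    · rintro S ⟨r, rfl⟩
      exact structure_completeTheory_complete _
    · rintro ⟨r, hr⟩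
      exact completeTheory_flip_ne (inferInstance : L.Structure M) r (hr.symm.trans hTeq)
    · intro φ hφ
      obtain ⟨s, hs, H⟩ := @flip_realize_eventually L (M : Type _) _
        (inferInstance : L.Structure M) Empty 0 φ
      have hs' : ((fun r : L.Relations 1 => (⟨1, r⟩ : Σ n, L.Relations n)) ⁻¹' s).Finite :=
        hs.preimage relations_one_injective.injOn
      obtain ⟨r, hr⟩ := hs'.infinite_compl.nonempty
      refine ⟨_, ⟨r, rfl⟩, ?_⟩
      rw [@mem_completeTheory L M (flip _ ⟨1, r⟩)]
      have hMφ : (M : Type _) ⊨ φ := T.realize_sentence_of_mem hφ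
      exact (H ⟨1, r⟩ hr default default).2 hMφ

end Approx
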